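/- arXiv:2408.16550 — 2 statements merged into one kernel-verified Lean document; each statement's English description precedes it below -/
import Mathlib

section
/- Let k = (k₁, k₂) ∈ ℝ² with k ≠ 0, let g ∈ ℂ with g ≠ 0, and let j_x, j_y, b_z ∈ ℂ satisfy the two relations b_z = i · g · (k₁ j_y − k₂ j_x) / ‖k‖ (the vertical-field relation) and k₁ j_x + k₂ j_y = 0 (the current continuity condition). Then j_x and j_y are uniquely determined by b_z: namely j_x = i k₂ b_z / (g ‖k‖) and j_y = −i k₁ b_z / (g ‖k‖). -/
/-- Pointwise-in-frequency recoverability of a divergence-free current from the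
vertical field component alone: if `b_z = i g (k₁ j_y - k₂ j_x)/‖k‖` and
`k₁ j_x + k₂ j_y = 0` with `k ≠ 0` and `g ≠ 0`, then
`j_x = i k₂ b_z/(g ‖k‖)` and `j_y = -i k₁ b_z/(g ‖k‖)`. -/
theorem current_recoverable_from_vertical_field
    (k : EuclideanSpace ℝ (Fin 2)) (hk : k ≠ 0) (g : ℂ) (hg : g ≠ 0)
    (jx jy bz : ℂ)
    (hbz : bz = Complex.I * g * (((k 0 : ℝ) : ℂ) * jy - ((k 1 : ℝ) : ℂ) * jx) / (‖k‖ : ℂ))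
    (hcont : ((k 0 : ℝ) : ℂ) * jx + ((k 1 : ℝ) : ℂ) * jy = 0) :
    jx = Complex.I * ((k 1 : ℝ) : ℂ) * bz / (g * (‖k‖ : ℂ)) ∧
      jy = -Complex.I * ((k 0 : ℝ) : ℂ) * bz / (g * (‖k‖ : ℂ)) := by
  have hnR : ‖k‖ ≠ 0 := norm_ne_zero_iff.mpr hk
  have hn : ((‖k‖ : ℝ) : ℂ) ≠ 0 := by exact_mod_cast hnR
  have hnorm : ((‖k‖ : ℝ) : ℂ) ^ 2 = ((k 0 : ℝ) : ℂ) ^ 2 + ((k 1 : ℝ) : ℂ) ^ 2 := by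
    have h : ‖k‖ ^ 2 = (k 0) ^ 2 + (k 1) ^ 2 := by
      rw [EuclideanSpace.norm_eq]
      rw [Real.sq_sqrt (by positivity)]
      simp [Fin.sum_univ_two, sq_abs]
    exact_mod_cast congrArg (Complex.ofReal) h
  subst hbz
  constructor
  · field_simp
    linear_combination jx * hnorm + (((k 0 : ℝ) : ℂ)) * hcont +
      (((k 1 : ℝ) : ℂ) * (jx * ((k 1 : ℝ) : ℂ) - ((k 0 : ℝ) : ℂ) * jy)) * Complex.I_sq
  · field_simp
    linear_combination jy * hnorm + (((k 1 : ℝ) : ℂ)) * hcont +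
      (((k 0 : ℝ) : ℂ) * (jy * ((k 0 : ℝ) : ℂ) - ((k 1 : ℝ) : ℂ) * jx)) * Complex.I_sq
end

section
/- Let ψ¹ : ℝ → ℝ be continuously differentiable with compact support and let ψ̃¹ : ℝ → ℝ be continuous with compact support and ∫_ℝ ψ̃¹ = 0. Define ψ⁰ := (1/4)(ψ¹)' and ψ̃⁰(x) := −4 ∫_{−∞}^{x} ψ̃¹(t) dt, and for j, k ∈ ℤ write ψ_{j,k}(t) = 2^{j/2} ψ(2^j t − k). If the family (ψ¹, ψ̃¹) is biorthogonal, i.e. ∫_ℝ ψ¹_{j,k}(x) ψ̃¹_{j',k'}(x) dx = δ_{j,j'} δ_{k,k'} for all j, j', k, k' ∈ ℤ, then the derived family is also biorthogonal: ∫_ℝ ψ⁰_{j,k}(x) ψ̃⁰_{j',k'}(x) dx = δ_{j,j'} δ_{k,k'} for all j, j', k, k' ∈ ℤ. -/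
open MeasureTheory

/-- Dyadic scaled-translated family: `ψ_{j,k}(t) = 2^{j/2} ψ(2^j t - k)`. -/
noncomputable def dyadic (ψ : ℝ → ℝ) (j k : ℤ) (t : ℝ) : ℝ :=
  (2 : ℝ) ^ ((j : ℝ) / 2) * ψ ((2 : ℝ) ^ j * t - k)

/-- Compact support is preserved by nonzero affine reparametrization. -/
lemma hasCompactSupport_affine {f : ℝ → ℝ} (hf : HasCompactSupport f)
    {a : ℝ} (ha : a ≠ 0) (b : ℝ) :
    HasCompactSupport (fun x => f (a * x - b)) := by
  have : (fun x => f (a * x - b)) =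
      f ∘ ((Homeomorph.mulLeft₀ a ha).trans (Homeomorph.subRight b)) := rfl
  rw [this]
  exact hf.comp_homeomorph _

lemma hasCompactSupport_const_mul {f : ℝ → ℝ} (hf : HasCompactSupport f) (c : ℝ) :
    HasCompactSupport (fun x => c * f x) :=
  hf.mul_left

/-- Biorthogonality is preserved by the differentiation/antidifferentiation
construction: if `(ψ¹, ψ̃¹)` is a biorthogonal family, then so is the derived
family `(ψ⁰, ψ̃⁰) = ((1/4)(ψ¹)', -4 ∫_{-∞}^· ψ̃¹)`. -/
theorem derived_family_biorthogonal (psi1 psi1t : ℝ → ℝ)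
    (hpsi1 : ContDiff ℝ 1 psi1) (hpsi1s : HasCompactSupport psi1)
    (hpsi1t : Continuous psi1t) (hpsi1ts : HasCompactSupport psi1t)
    (hmean : ∫ t : ℝ, psi1t t = 0)
    (hbi : ∀ j j' k k' : ℤ,
      ∫ x : ℝ, dyadic psi1 j k x * dyadic psi1t j' k' x =
        if j = j' ∧ k = k' then 1 else 0) :
    ∀ j j' k k' : ℤ,
      ∫ x : ℝ, dyadic (fun t => (1 / 4) * deriv psi1 t) j k x *
          dyadic (fun u => -4 * ∫ t in Set.Iic u, psi1t t) j' k' x =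
        if j = j' ∧ k = k' then 1 else 0 := by
  intro j j' k k'
  have hint : Integrable psi1t := hpsi1t.integrable_of_hasCompactSupport hpsi1ts
  set F : ℝ → ℝ := fun u => ∫ t in Set.Iic u, psi1t t with hFdef
  -- F has derivative psi1t everywhere
  have hFeq : ∀ u : ℝ, F u = F 0 + ∫ t in (0:ℝ)..u, psi1t t := by
    intro u
    have h := intervalIntegral.integral_Iic_sub_Iic (μ := volume) (f := psi1t)
      (a := 0) (b := u) hint.integrableOn hint.integrableOn
    simp only [hFdef]
    linarith [h]
  have hF : ∀ u : ℝ, HasDerivAt F (psi1t u) u := by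
    intro u
    have h1 : HasDerivAt (fun v => F 0 + ∫ t in (0:ℝ)..v, psi1t t) (psi1t u) u :=
      ((hpsi1t.integral_hasStrictDerivAt 0 u).hasDerivAt).const_add (F 0)
    exact h1.congr_of_eventuallyEq (Filter.Eventually.of_forall fun v => hFeq v)
  have hFdiff : Differentiable ℝ F := fun u => (hF u).differentiableAt
  have hFC1 : ContDiff ℝ 1 F := by
    rw [contDiff_one_iff_deriv]
    refine ⟨hFdiff, ?_⟩
    have : deriv F = psi1t := funext fun u => (hF u).deriv
    rw [this]; exact hpsi1t
  -- constants
  set a : ℝ := (2 : ℝ) ^ j with ha_def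
  set a' : ℝ := (2 : ℝ) ^ j' with ha'_def
  set c : ℝ := (2 : ℝ) ^ ((j : ℝ) / 2) with hc_def
  set c' : ℝ := (2 : ℝ) ^ ((j' : ℝ) / 2) with hc'_def
  have ha : a ≠ 0 := zpow_ne_zero _ two_ne_zero
  have ha' : a' ≠ 0 := zpow_ne_zero _ two_ne_zero
  -- the two C¹ factors
  set u : ℝ → ℝ := fun x => c * psi1 (a * x - k) with hu_def
  set v : ℝ → ℝ := fun x => c' * F (a' * x - k') with hv_def
  set U : ℝ → ℝ := fun x => c * (deriv psi1 (a * x - k) * a) with hU_def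
  set V : ℝ → ℝ := fun x => c' * (psi1t (a' * x - k') * a') with hV_def
  have haff : ∀ (b e : ℝ) (x : ℝ), b ≠ 0 → HasDerivAt (fun x => b * x - e) b x := by
    intro b e x _
    simpa using ((hasDerivAt_id x).const_mul b).sub_const e
  have hu : ∀ x, HasDerivAt u (U x) x := fun x =>
    ((((hpsi1.differentiable one_ne_zero) _).hasDerivAt).comp x (haff a k x ha)).const_mul c
  have hv : ∀ x, HasDerivAt v (V x) x := fun x =>
    ((hF _).comp x (haff a' k' x ha')).const_mul c'
  -- compact supports
  have hus : HasCompactSupport u :=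
    hasCompactSupport_const_mul (hasCompactSupport_affine hpsi1s ha _) c
  have hUs : HasCompactSupport U := by
    have h1 : HasCompactSupport (fun x => deriv psi1 (a * x - (k:ℝ))) :=
      hasCompactSupport_affine hpsi1s.deriv ha _
    have h2 : HasCompactSupport (fun x => deriv psi1 (a * x - (k:ℝ)) * a) := by
      simpa [mul_comm] using hasCompactSupport_const_mul h1 a
    exact hasCompactSupport_const_mul h2 c
  have huvs : HasCompactSupport (fun x => u x * v x) := hus.mul_right
  -- continuity
  have hDcont : Continuous (deriv psi1) := hpsi1.continuous_deriv le_rfl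
  have hucont : Continuous u := continuous_const.mul ((hpsi1.continuous).comp (by fun_prop))
  have hvcont : Continuous v := continuous_const.mul
    (hFdiff.continuous.comp (by fun_prop))
  have hUcont : Continuous U := continuous_const.mul
    ((hDcont.comp (by fun_prop)).mul continuous_const)
  have hVcont : Continuous V := continuous_const.mul
    ((hpsi1t.comp (by fun_prop)).mul continuous_const)
  -- C¹ of the product
  have huC1 : ContDiff ℝ 1 u :=
    contDiff_const.mul (hpsi1.comp (by
      exact (contDiff_const.mul contDiff_id).sub contDiff_const))
  have hvC1 : ContDiff ℝ 1 v :=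
    contDiff_const.mul (hFC1.comp (by
      exact (contDiff_const.mul contDiff_id).sub contDiff_const))
  have huvC1 : ContDiff ℝ 1 (fun x => u x * v x) := huC1.mul hvC1
  -- the integral of the derivative of the product vanishes
  have hderiv_eq : ∀ x, deriv (fun x => u x * v x) x = U x * v x + u x * V x :=
    fun x => ((hu x).mul (hv x)).deriv
  have hderiv_cont : Continuous (deriv fun x => u x * v x) :=
    (contDiff_one_iff_deriv.1 huvC1).2
  have hderiv_int : Integrable (deriv fun x => u x * v x) :=
    hderiv_cont.integrable_of_hasCompactSupport huvs.deriv
  have h0 : ∫ x : ℝ, deriv (fun x => u x * v x) x = 0 := by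
    rw [← intervalIntegral.integral_Iic_add_Ioi (b := 0) hderiv_int.integrableOn hderiv_int.integrableOn,
      huvs.integral_Iic_deriv_eq huvC1, huvs.integral_Ioi_deriv_eq huvC1]
    ring
  -- split the integral
  have hUv_int : Integrable (fun x => U x * v x) :=
    (hUcont.mul hvcont).integrable_of_hasCompactSupport hUs.mul_right
  have huV_int : Integrable (fun x => u x * V x) :=
    (hucont.mul hVcont).integrable_of_hasCompactSupport hus.mul_right
  have h0' : (∫ x : ℝ, U x * v x) + ∫ x : ℝ, u x * V x = 0 := by
    rw [← integral_add hUv_int huV_int]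
    simp only [← hderiv_eq]
    exact h0
  have hIBP : (∫ x : ℝ, U x * v x) = - ∫ x : ℝ, u x * V x := by linarith
  -- identify the goal integrand
  have hgoal_eq : (fun x => dyadic (fun t => (1 / 4) * deriv psi1 t) j k x *
      dyadic (fun w => -4 * ∫ t in Set.Iic w, psi1t t) j' k' x) =
      fun x => -(a⁻¹) * (U x * v x) := by
    funext x
    simp only [dyadic, hU_def, hv_def, hFdef, ← ha_def, ← ha'_def, ← hc_def, ← hc'_def]
    field_simp
  have huV_eq : (fun x => u x * V x) =
      fun x => a' * (dyadic psi1 j k x * dyadic psi1t j' k' x) := by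
    funext x
    simp only [dyadic, hu_def, hV_def, ← ha_def, ← ha'_def, ← hc_def, ← hc'_def]
    ring
  rw [hgoal_eq, integral_const_mul, hIBP, huV_eq, integral_const_mul, hbi]
  by_cases h : j = j' ∧ k = k'
  · obtain ⟨rfl, rfl⟩ := h
    simp [ha'_def, ← ha_def, ha]
  · simp [h]
end
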